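/- For 1 ≤ k ≤ n, the degenerate Stirling polynomials of the second kind satisfy the recurrence S_{2,λ}(n+1,k|x) = (x+k) S_{2,λ}(n,k|x) + S_{2,λ}(n,k-1|x) − nλ S_{2,λ}(n,k|x). -/

import Mathlib

open Finset

/-- The λ-binomial coefficient `binom_λ(y,n) = y(y-λ)⋯(y-(n-1)λ)/n!`. -/
noncomputable def dbinom (lam y : ℝ) (n : ℕ) : ℝ :=
  (∏ i ∈ range n, (y - i * lam)) / n.factorial

/-- Degenerate Stirling polynomials of the second kind:
`S_{2,λ}(n,k|x) = (n!/k!) ∑_{l=0}^k C(k,l)(-1)^{k-l} binom_λ(l+x,n)`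
(this expression vanishes when `n < k`). -/
noncomputable def S2deg (lam : ℝ) (n k : ℕ) (x : ℝ) : ℝ :=
  (n.factorial : ℝ) / (k.factorial : ℝ) *
    ∑ l ∈ range (k + 1), (k.choose l : ℝ) * (-1) ^ (k - l) * dbinom lam (l + x) n


lemma dbinom_succ (lam y : ℝ) (n : ℕ) :
    dbinom lam y (n+1) = (y - n*lam) * dbinom lam y n / (n+1) := by
  have h : (n.factorial : ℝ) ≠ 0 := Nat.cast_ne_zero.mpr n.factorial_ne_zero
  have h2 : ((n:ℝ)+1) ≠ 0 := by positivity
  unfold dbinom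
  rw [prod_range_succ, Nat.factorial_succ]
  push_cast
  field_simp
  have e : ∀ i : ℕ, y - lam * (i:ℝ) = y - (i:ℝ) * lam := fun i => by ring
  simp only [e]
  ring

lemma ch (m l : ℕ) : (m+1).choose l * (m+1-l) = (m+1) * m.choose l := by
  have h1 := Nat.add_one_mul_choose_eq m l
  have h2 := Nat.choose_succ_right_eq (m+1) l
  rw [h1, ← h2]

/-- For `1 ≤ k ≤ n`:
`S_{2,λ}(n+1,k|x) = (x+k) S_{2,λ}(n,k|x) + S_{2,λ}(n,k-1|x) − nλ S_{2,λ}(n,k|x)`. -/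
theorem stmt7 (lam x : ℝ) (n k : ℕ) (hk : 1 ≤ k) (hkn : k ≤ n) :
    S2deg lam (n + 1) k x =
      (x + k) * S2deg lam n k x + S2deg lam n (k - 1) x - n * lam * S2deg lam n k x := by
  obtain ⟨m, rfl⟩ : ∃ m, k = m + 1 := ⟨k - 1, by omega⟩
  have hn1 : ((n:ℝ)+1) ≠ 0 := by positivity
  simp only [S2deg, Nat.add_sub_cancel]
  have hL : ∑ l ∈ range (m+1+1), ((m+1).choose l : ℝ) * (-1)^(m+1-l) * dbinom lam (l+x) (n+1)
      = (1/((n:ℝ)+1)) * ∑ l ∈ range (m+1+1), ((m+1).choose l : ℝ) * (-1)^(m+1-l) *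
          ((l + x - n*lam) * dbinom lam (l+x) n) := by
    rw [mul_sum]
    refine sum_congr rfl fun l _ => ?_
    rw [dbinom_succ]
    field_simp
  have hsplit : ∑ l ∈ range (m+1+1), ((m+1).choose l : ℝ) * (-1)^(m+1-l) *
          ((l + x - n*lam) * dbinom lam (l+x) n)
      = (x + ((m:ℝ)+1) - n*lam) *
          ∑ l ∈ range (m+1+1), ((m+1).choose l : ℝ) * (-1)^(m+1-l) * dbinom lam (l+x) n
        + ∑ l ∈ range (m+1+1), ((m+1).choose l : ℝ) * (-1)^(m+1-l) * ((l:ℝ) - ((m:ℝ)+1)) *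
            dbinom lam (l+x) n := by
    rw [mul_sum, ← sum_add_distrib]
    refine sum_congr rfl fun l _ => ?_
    ring
  have hlast : ∑ l ∈ range (m+1+1), ((m+1).choose l : ℝ) * (-1)^(m+1-l) * ((l:ℝ) - ((m:ℝ)+1)) *
          dbinom lam (l+x) n
      = ((m:ℝ)+1) * ∑ l ∈ range (m+1), (m.choose l : ℝ) * (-1)^(m-l) * dbinom lam (l+x) n := by
    rw [sum_range_succ, mul_sum]
    have hz : (((m+1:ℕ)):ℝ) - ((m:ℝ)+1) = 0 := by push_cast; ring
    rw [hz]
    simp only [mul_zero, zero_mul, add_zero]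
    refine sum_congr rfl fun l hl => ?_
    have hlm : l ≤ m := by simpa [Nat.lt_succ_iff] using mem_range.mp hl
    have h1 : m + 1 - l = (m - l) + 1 := by omega
    have hcast : ((m+1).choose l : ℝ) * ((m+1-l : ℕ) : ℝ) = ((m:ℝ)+1) * (m.choose l : ℝ) := by
      exact_mod_cast congrArg (Nat.cast : ℕ → ℝ) (ch m l)
    have h2 : ((l:ℝ) - ((m:ℝ)+1)) = -(((m+1-l : ℕ)):ℝ) := by
      rw [Nat.cast_sub (by omega)]
      push_cast; ring
    rw [h1, pow_succ, h2]
    linear_combination ((-1:ℝ))^(m-l) * dbinom lam (l+x) n * hcast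
  rw [hL, hsplit, hlast]
  have hfm : ((m.factorial : ℝ)) ≠ 0 := Nat.cast_ne_zero.mpr m.factorial_ne_zero
  have hfn : ((n.factorial : ℝ)) ≠ 0 := Nat.cast_ne_zero.mpr n.factorial_ne_zero
  have hm1 : ((m:ℝ)+1) ≠ 0 := by positivity
  rw [Nat.factorial_succ (n), Nat.factorial_succ m]
  push_cast
  field_simp
  ring
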